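/- Let θ be an involutive isometry of a Euclidean space preserving a root system Φ, with real roots Φ^re, imaginary roots Φ^im, Weyl vectors ρ^re, ρ^im of chosen positive systems, and Φ^c = {α ∈ Φ : (α, ρ^re) = (α, ρ^im) = 0}. Then Φ^c is a θ-invariant sub-root system of Φ satisfying Φ^c ∩ Φ^im = ∅ and Φ^c ∩ Φ^re = ∅. -/

import Mathlib

open RealInnerProductSpace

variable {V : Type*} [NormedAddCommGroup V] [InnerProductSpace ℝ V] [FiniteDimensional ℝ V]

/-- The reflection in the hyperplane orthogonal to `α`. -/
noncomputable def sRefl (α : V) : V ≃ₗᵢ[ℝ] V := Submodule.reflection (ℝ ∙ α)ᗮ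

/-- A reduced crystallographic root system in a real inner product space. -/
structure IsRootSystem (Ψ : Set V) : Prop where
  finite : Ψ.Finite
  ne_zero : ∀ α ∈ Ψ, α ≠ 0
  neg_mem : ∀ α ∈ Ψ, -α ∈ Ψ
  reduced : ∀ α ∈ Ψ, ∀ t : ℝ, t • α ∈ Ψ → t = 1 ∨ t = -1
  refl_mem : ∀ α ∈ Ψ, ∀ β ∈ Ψ, sRefl α β ∈ Ψ
  crystallographic : ∀ α ∈ Ψ, ∀ β ∈ Ψ, ∃ n : ℤ, 2 * ⟪β, α⟫ / ⟪α, α⟫ = (n : ℝ)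

/-- `P` is a system of positive roots for `Ψ`. -/
structure IsPositiveSystem (Ψ P : Set V) : Prop where
  subset : P ⊆ Ψ
  mem_or_neg_mem : ∀ α ∈ Ψ, α ∈ P ∨ -α ∈ P
  not_neg_mem : ∀ α ∈ P, -α ∉ P
  add_mem : ∀ α ∈ P, ∀ β ∈ P, α + β ∈ Ψ → α + β ∈ P

/-- `Pi` is a sub-root system of `Ψ`: closed under negation and under addition of roots. -/
def IsSubRootSystem (Ψ Pi : Set V) : Prop :=
  Pi ⊆ Ψ ∧ (∀ α ∈ Pi, -α ∈ Pi) ∧ ∀ α ∈ Pi, ∀ β ∈ Pi, α + β ∈ Ψ → α + β ∈ Pi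

/-- `Δ` is a base (system of simple roots) of `Ψ`. -/
structure IsBase (Ψ : Set V) (Δ : Finset V) : Prop where
  subset : ↑Δ ⊆ Ψ
  indep : LinearIndependent ℝ (fun α : Δ => (α : V))
  decomp : ∀ β ∈ Ψ, ∃ c : V → ℤ, β = ∑ α ∈ Δ, (c α : ℝ) • α ∧
    ((∀ α ∈ Δ, 0 ≤ c α) ∨ (∀ α ∈ Δ, c α ≤ 0))

/-- The Weyl group of `Ψ`: the subgroup of linear isometries generated by root reflections. -/
noncomputable def weylGroup (Ψ : Set V) : Subgroup (V ≃ₗᵢ[ℝ] V) :=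
  Subgroup.closure {g | ∃ α ∈ Ψ, g = sRefl α}

/-- `w` commutes with `θ` as a map on `V`. -/
def commutesWith (θ w : V ≃ₗᵢ[ℝ] V) : Prop := ∀ x : V, θ (w x) = w (θ x)


set_option linter.unusedSectionVars false

lemma sRefl_apply (α x : V) : sRefl α x = x - (2 * ⟪x, α⟫ / ⟪α, α⟫) • α := by
  rw [sRefl, Submodule.reflection_orthogonal_apply, Submodule.reflection_singleton_apply]
  simp only [RCLike.ofReal_real_eq_id, id_eq]
  rw [real_inner_self_eq_norm_sq, real_inner_comm, two_smul]
  have : (2 * ⟪x, α⟫ / ‖α‖ ^ 2) • α = (⟪x, α⟫ / ‖α‖ ^ 2) • α + (⟪x, α⟫ / ‖α‖ ^ 2) • α := by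
    rw [← add_smul]; ring_nf
  rw [this]; abel

lemma inner_self_pos' {x : V} (hx : x ≠ 0) : 0 < ⟪x, x⟫ := by
  rw [real_inner_self_eq_norm_mul_norm]
  exact mul_pos (norm_pos_iff.mpr hx) (norm_pos_iff.mpr hx)

/-- Strict Cauchy–Schwarz consequence. -/
lemma cartan_prod_lt {Φ : Set V} (hΦ : IsRootSystem Φ) {α β : V} (hα : α ∈ Φ) (hβ : β ∈ Φ)
    (hne : β ≠ α) (hne' : β ≠ -α) : ⟪α, β⟫ * ⟪α, β⟫ < ⟪α, α⟫ * ⟪β, β⟫ := by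
  have hα0 := hΦ.ne_zero α hα
  have hβ0 := hΦ.ne_zero β hβ
  have hnα : (‖α‖ : ℝ) ≠ 0 := norm_ne_zero_iff.mpr hα0
  have hpos : (0:ℝ) < ‖β‖ / ‖α‖ := div_pos (norm_pos_iff.mpr hβ0) (norm_pos_iff.mpr hα0)
  have h1 : |⟪α, β⟫| < ‖α‖ * ‖β‖ := by
    rcases abs_cases (⟪α, β⟫ : ℝ) with ⟨h, _⟩ | ⟨h, _⟩
    · rw [h, inner_lt_norm_mul_iff_real]
      intro hc
      have hβα : β = (‖β‖ / ‖α‖) • α := by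
        have := congrArg (fun v => (‖α‖ : ℝ)⁻¹ • v) hc.symm
        simpa [smul_smul, inv_mul_cancel₀ hnα, div_eq_inv_mul] using this
      rcases hΦ.reduced α hα (‖β‖ / ‖α‖) (by rw [← hβα]; exact hβ) with h1 | h1
      · exact hne (by rw [hβα, h1, one_smul])
      · rw [h1] at hpos; linarith
    · rw [h, ← inner_neg_left]
      have hiff := inner_lt_norm_mul_iff_real (F := V) (x := -α) (y := β)
      rw [norm_neg] at hiff
      rw [hiff]
      intro hc
      have hβα : β = (-(‖β‖ / ‖α‖)) • α := by
        have := congrArg (fun v => (‖α‖ : ℝ)⁻¹ • v) hc.symm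
        simp only [smul_smul, smul_neg] at this
        rw [inv_mul_cancel₀ hnα, one_smul] at this
        rw [neg_smul, div_eq_inv_mul]
        exact this
      rcases hΦ.reduced α hα (-(‖β‖ / ‖α‖)) (by rw [← hβα]; exact hβ) with h1 | h1
      · linarith
      · exact hne' (by rw [hβα, h1, neg_one_smul])
  have h2 : ⟪α, β⟫ * ⟪α, β⟫ = |⟪α, β⟫| * |⟪α, β⟫| := (abs_mul_abs_self _).symm
  rw [h2, real_inner_self_eq_norm_mul_norm, real_inner_self_eq_norm_mul_norm]
  calc |⟪α, β⟫| * |⟪α, β⟫| < (‖α‖ * ‖β‖) * (‖α‖ * ‖β‖) := by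
        have h0 : 0 ≤ |⟪α, β⟫| := abs_nonneg _
        nlinarith
    _ = ‖α‖ * ‖α‖ * (‖β‖ * ‖β‖) := by ring

lemma root_add_mem {Φ : Set V} (hΦ : IsRootSystem Φ) {α β : V} (hα : α ∈ Φ) (hβ : β ∈ Φ)
    (hne' : β ≠ -α) (hlt : ⟪α, β⟫ < 0) : β + α ∈ Φ := by
  have haa : 0 < ⟪α, α⟫ := inner_self_pos' (hΦ.ne_zero α hα)
  have hbb : 0 < ⟪β, β⟫ := inner_self_pos' (hΦ.ne_zero β hβ)
  have hne : β ≠ α := by rintro rfl; linarith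
  obtain ⟨n, hn⟩ := hΦ.crystallographic α hα β hβ
  obtain ⟨n', hn'⟩ := hΦ.crystallographic β hβ α hα
  have hβα : ⟪β, α⟫ < 0 := by rwa [real_inner_comm]
  have hnneg : (n : ℝ) < 0 := by rw [← hn]; exact div_neg_of_neg_of_pos (by linarith) haa
  have hn'neg : (n' : ℝ) < 0 := by rw [← hn']; exact div_neg_of_neg_of_pos (by linarith) hbb
  have hprod : (n : ℝ) * n' < 4 := by
    rw [← hn, ← hn', div_mul_div_comm]
    rw [div_lt_iff₀ (by positivity)]
    have key := cartan_prod_lt hΦ hα hβ hne hne'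
    have hcomm : ⟪β, α⟫ = ⟪α, β⟫ := real_inner_comm α β
    nlinarith [key, hcomm]
  have hnle : n ≤ -1 := by
    have : n < 0 := by exact_mod_cast hnneg
    omega
  have hn'le : n' ≤ -1 := by
    have : n' < 0 := by exact_mod_cast hn'neg
    omega
  have hprodZ : n * n' < 4 := by exact_mod_cast hprod
  have : n = -1 ∨ n' = -1 := by
    by_contra hc
    push_neg at hc
    have h1 : n ≤ -2 := by omega
    have h2 : n' ≤ -2 := by omega
    nlinarith
  rcases this with h | h
  · have hmem := hΦ.refl_mem α hα β hβ
    rw [sRefl_apply, hn, h] at hmem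
    push_cast at hmem
    rw [neg_one_smul, sub_neg_eq_add] at hmem
    exact hmem
  · have hmem := hΦ.refl_mem β hβ α hα
    rw [sRefl_apply, hn', h] at hmem
    push_cast at hmem
    rw [neg_one_smul, sub_neg_eq_add] at hmem
    rw [add_comm]
    exact hmem

lemma inner_sRefl_self {α : V} (hα : α ≠ 0) (x : V) : ⟪α, sRefl α x⟫ = -⟪α, x⟫ := by
  have haa : ⟪α, α⟫ ≠ 0 := ne_of_gt (inner_self_pos' hα)
  rw [sRefl_apply, inner_sub_right, real_inner_smul_right, real_inner_comm x α]
  field_simp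
  ring

lemma sRefl_sRefl (α x : V) : sRefl α (sRefl α x) = x := by
  unfold sRefl; exact Submodule.reflection_reflection _ x

lemma sRefl_self (α : V) : sRefl α α = -α :=
  Submodule.reflection_orthogonalComplement_singleton_eq_neg α

lemma sum_pos_of_posSystem {Φ : Set V} (hΦ : IsRootSystem Φ) {Ψ : Set V} (hsub : Ψ ⊆ Φ)
    (hneg : ∀ a ∈ Ψ, -a ∈ Ψ)
    (hadd : ∀ a ∈ Ψ, ∀ b ∈ Ψ, a + b ∈ Φ → a + b ∈ Ψ)
    (hrefl : ∀ a ∈ Ψ, ∀ b ∈ Ψ, sRefl a b ∈ Ψ)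
    {P : Finset V} (hP : IsPositiveSystem Ψ ↑P) {α : V} (hα : α ∈ P) :
    0 < ⟪α, ∑ β ∈ P, β⟫ := by
  classical
  have hαP : α ∈ (↑P : Set V) := hα
  have hαΨ : α ∈ Ψ := hP.subset hαP
  have hαΦ : α ∈ Φ := hsub hαΨ
  have hα0 : α ≠ 0 := hΦ.ne_zero α hαΦ
  have haa : 0 < ⟪α, α⟫ := inner_self_pos' hα0
  rw [inner_sum]
  rw [← Finset.sum_filter_add_sum_filter_not P (fun β => sRefl α β ∈ P)]
  have hzero : ∑ β ∈ P.filter (fun β => sRefl α β ∈ P), ⟪α, β⟫ = 0 := by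
    apply Finset.sum_involution (fun β _ => sRefl α β)
    · intro b _; rw [inner_sRefl_self hα0]; ring
    · intro b _ hfb hc
      apply hfb
      have h3 : sRefl α b = b - (2 * ⟪b, α⟫ / ⟪α, α⟫) • α := sRefl_apply α b
      rw [hc] at h3
      have h0 : (2 * ⟪b, α⟫ / ⟪α, α⟫) • α = 0 := sub_eq_self.mp h3.symm
      have h1 : 2 * ⟪b, α⟫ / ⟪α, α⟫ = 0 := by
        by_contra hcc
        exact hα0 ((smul_eq_zero.mp h0).resolve_left hcc)
      have h2 : ⟪b, α⟫ = 0 := by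
        field_simp at h1
        linarith
      rw [real_inner_comm α b] at h2
      exact h2
    · intro b hb
      rw [Finset.mem_filter] at hb ⊢
      exact ⟨hb.2, by rw [sRefl_sRefl]; exact hb.1⟩
    · intro b _; exact sRefl_sRefl α b
  rw [hzero, zero_add]
  have hterm : ∀ b ∈ P.filter (fun β => ¬ sRefl α β ∈ P), 0 < ⟪α, b⟫ := by
    intro b hb
    rw [Finset.mem_filter] at hb
    obtain ⟨hbP, hbrefl⟩ := hb
    have hbΨ : b ∈ Ψ := hP.subset hbP
    have hbΦ : b ∈ Φ := hsub hbΨ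
    have hbb : 0 < ⟪b, b⟫ := inner_self_pos' (hΦ.ne_zero b hbΦ)
    have hne' : b ≠ -α := fun h => hP.not_neg_mem α hαP (h ▸ hbP)
    by_contra hcon
    push_neg at hcon
    rcases hcon.lt_or_eq with hlt | heq
    · -- ⟪α, b⟫ < 0 : the descent
      have hne : b ≠ α := by rintro rfl; linarith
      obtain ⟨n, hn⟩ := hΦ.crystallographic α hαΦ b hbΦ
      obtain ⟨n', hn'⟩ := hΦ.crystallographic b hbΦ α hαΦ
      have hbα : ⟪b, α⟫ < 0 := by rwa [real_inner_comm]
      have hnneg : (n : ℝ) < 0 := by rw [← hn]; exact div_neg_of_neg_of_pos (by linarith) haa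
      have hn'neg : (n' : ℝ) < 0 := by rw [← hn']; exact div_neg_of_neg_of_pos (by linarith) hbb
      have hprod : (n : ℝ) * n' < 4 := by
        rw [← hn, ← hn', div_mul_div_comm]
        rw [div_lt_iff₀ (by positivity)]
        have key := cartan_prod_lt hΦ hαΦ hbΦ hne hne'
        have hcomm : ⟪b, α⟫ = ⟪α, b⟫ := real_inner_comm α b
        nlinarith [key, hcomm]
      have hnle : n ≤ -1 := by
        have : n < 0 := by exact_mod_cast hnneg
        omega
      have hn'le : n' ≤ -1 := by
        have : n' < 0 := by exact_mod_cast hn'neg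
        omega
      have hprodZ : n * n' < 4 := by exact_mod_cast hprod
      have hngen : -3 ≤ n := by nlinarith
      have hn3 : (-3 : ℝ) ≤ (n : ℝ) := by exact_mod_cast hngen
      have hba_eq : ⟪b, α⟫ = (n : ℝ) * ⟪α, α⟫ / 2 := by
        field_simp at hn
        linarith
      have hab_eq : ⟪α, b⟫ = (n : ℝ) * ⟪α, α⟫ / 2 := by
        rw [real_inner_comm α b] at hba_eq; exact hba_eq
      -- descent claim
      have claim : ∀ d : ℕ, (d : ℤ) ≤ -n - 1 → -b - (-(n : ℝ) - (d : ℝ)) • α ∈ P := by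
        intro d
        induction d with
        | zero =>
          intro _
          have hsΨ : sRefl α b ∈ Ψ := hrefl α hαΨ b hbΨ
          have hmem : sRefl α b ∈ (↑P : Set V) ∨ -(sRefl α b) ∈ (↑P : Set V) :=
            hP.mem_or_neg_mem _ hsΨ
          rcases hmem with h | h
          · exact absurd h hbrefl
          · have heq2 : -(sRefl α b) = -b - (-(n : ℝ) - ((0:ℕ) : ℝ)) • α := by
              rw [sRefl_apply, hn]
              push_cast
              module
            rw [← heq2]
            exact h
        | succ d ih =>
          intro hd
          have hd' : (d : ℤ) ≤ -n - 1 := by push_cast at hd; omega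
          have hγP : -b - (-(n : ℝ) - (d : ℝ)) • α ∈ P := ih hd'
          set γ : V := -b - (-(n : ℝ) - (d : ℝ)) • α with hγdef
          have hγΨ : γ ∈ Ψ := hP.subset hγP
          have hγΦ : γ ∈ Φ := hsub hγΨ
          have hj1 : (2 : ℝ) ≤ -(n : ℝ) - (d : ℝ) := by
            have : (2 : ℤ) ≤ -n - d := by push_cast at hd; omega
            exact_mod_cast this
          have hexp : ⟪α, γ⟫ = -⟪α, b⟫ - (-(n : ℝ) - (d : ℝ)) * ⟪α, α⟫ := by
            rw [hγdef, inner_sub_right, inner_neg_right, real_inner_smul_right]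
          have hinner : ⟪α, γ⟫ < 0 := by
            rw [hexp, hab_eq]
            have m1 := mul_le_mul_of_nonneg_right hn3 haa.le
            have m2 := mul_le_mul_of_nonneg_right hj1 haa.le
            linarith
          have hγne : γ ≠ -α := by
            intro hc
            rw [hγdef] at hc
            have hbval : b = (1 - (-(n : ℝ) - (d : ℝ))) • α := by
              linear_combination (norm := module) (-1 : ℝ) • hc
            rcases hΦ.reduced α hαΦ _ (hbval ▸ hbΦ) with h1 | h1
            · linarith
            · have hb2 : b = -α := by rw [hbval, h1, neg_one_smul]
              exact hne' hb2
          have hsumΦ : γ + α ∈ Φ := root_add_mem hΦ hαΦ hγΦ hγne hinner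
          have hsumΨ : γ + α ∈ Ψ := hadd γ hγΨ α hαΨ hsumΦ
          have hsumP : γ + α ∈ P := hP.add_mem γ hγP α hαP hsumΨ
          have hkey : γ + α = -b - (-(n : ℝ) - ((d + 1 : ℕ) : ℝ)) • α := by
            rw [hγdef]
            push_cast
            module
          rw [← hkey]
          exact hsumP
      have h1P := claim (-n - 1).toNat (by omega)
      have htn : (((-n - 1).toNat : ℕ) : ℝ) = -(n : ℝ) - 1 := by
        have h4 : (((-n - 1).toNat : ℕ) : ℤ) = -n - 1 := Int.toNat_of_nonneg (by omega)
        exact_mod_cast h4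
      rw [htn] at h1P
      have hfin : (-b - (-(n : ℝ) - (-(n : ℝ) - 1)) • α) + b ∈ P := by
        apply hP.add_mem _ h1P b hbP
        have hev : (-b - (-(n : ℝ) - (-(n : ℝ) - 1)) • α) + b = -α := by module
        rw [hev]
        exact hneg α hαΨ
      have hev : (-b - (-(n : ℝ) - (-(n : ℝ) - 1)) • α) + b = -α := by module
      rw [hev] at hfin
      exact hP.not_neg_mem α hαP hfin
    · -- ⟪α, b⟫ = 0 : then sRefl α b = b ∈ P, contradiction
      apply hbrefl
      have h2 : ⟪b, α⟫ = 0 := by rw [real_inner_comm]; exact heq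
      have h3 : sRefl α b = b := by rw [sRefl_apply, h2]; simp
      rw [h3]
      exact hbP
  apply Finset.sum_pos hterm
  refine ⟨α, ?_⟩
  rw [Finset.mem_filter]
  refine ⟨hα, ?_⟩
  rw [sRefl_self]
  exact hP.not_neg_mem α hαP


/-- `Φ^c = {α ∈ Φ : (α, ρ^re) = (α, ρ^im) = 0}` is a `θ`-invariant sub-root system of `Φ`
containing no imaginary and no real roots. -/
theorem stmt10 (Φ : Set V) (hΦ : IsRootSystem Φ) (θ : V ≃ₗᵢ[ℝ] V)
    (hinv : ∀ x, θ (θ x) = x) (hΦθ : ⇑θ '' Φ = Φ)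
    (Pre Pim : Finset V)
    (hPre : IsPositiveSystem {α ∈ Φ | θ α = -α} ↑Pre)
    (hPim : IsPositiveSystem {α ∈ Φ | θ α = α} ↑Pim)
    (ρre ρim : V) (hρre : ρre = (2⁻¹ : ℝ) • ∑ β ∈ Pre, β)
    (hρim : ρim = (2⁻¹ : ℝ) • ∑ β ∈ Pim, β)
    (Φc : Set V) (hΦc : Φc = {α ∈ Φ | ⟪α, ρre⟫ = 0 ∧ ⟪α, ρim⟫ = 0}) :
    IsSubRootSystem Φ Φc ∧ ⇑θ '' Φc = Φc ∧
      Φc ∩ {α ∈ Φ | θ α = α} = ∅ ∧ Φc ∩ {α ∈ Φ | θ α = -α} = ∅ := by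
  have hθmem : ∀ x ∈ Φ, θ x ∈ Φ := by
    intro x hx
    rw [← hΦθ]
    exact ⟨x, hx, rfl⟩
  have hselfadj : ∀ x y : V, ⟪θ x, y⟫ = ⟪x, θ y⟫ := by
    intro x y
    conv_lhs => rw [← hinv y]
    exact θ.inner_map_map x (θ y)
  -- Φ^re and Φ^im structural facts
  have hreS : ∀ a ∈ ({α ∈ Φ | θ α = -α} : Set V), a ∈ Φ ∧ θ a = -a := fun a ha => ha
  have himS : ∀ a ∈ ({α ∈ Φ | θ α = α} : Set V), a ∈ Φ ∧ θ a = a := fun a ha => ha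
  have hreNeg : ∀ a ∈ ({α ∈ Φ | θ α = -α} : Set V), -a ∈ {α ∈ Φ | θ α = -α} := by
    intro a ha
    exact ⟨hΦ.neg_mem a ha.1, by rw [map_neg, ha.2, neg_neg]⟩
  have himNeg : ∀ a ∈ ({α ∈ Φ | θ α = α} : Set V), -a ∈ {α ∈ Φ | θ α = α} := by
    intro a ha
    exact ⟨hΦ.neg_mem a ha.1, by rw [map_neg, ha.2]⟩
  have hreAdd : ∀ a ∈ ({α ∈ Φ | θ α = -α} : Set V), ∀ b ∈ ({α ∈ Φ | θ α = -α} : Set V),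
      a + b ∈ Φ → a + b ∈ ({α ∈ Φ | θ α = -α} : Set V) := by
    intro a ha b hb hab
    exact ⟨hab, by rw [map_add, ha.2, hb.2, neg_add]⟩
  have himAdd : ∀ a ∈ ({α ∈ Φ | θ α = α} : Set V), ∀ b ∈ ({α ∈ Φ | θ α = α} : Set V),
      a + b ∈ Φ → a + b ∈ ({α ∈ Φ | θ α = α} : Set V) := by
    intro a ha b hb hab
    exact ⟨hab, by rw [map_add, ha.2, hb.2]⟩
  have hreRefl : ∀ a ∈ ({α ∈ Φ | θ α = -α} : Set V), ∀ b ∈ ({α ∈ Φ | θ α = -α} : Set V),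
      sRefl a b ∈ ({α ∈ Φ | θ α = -α} : Set V) := by
    intro a ha b hb
    refine ⟨hΦ.refl_mem a ha.1 b hb.1, ?_⟩
    rw [sRefl_apply, map_sub, map_smul, ha.2, hb.2]
    module
  have himRefl : ∀ a ∈ ({α ∈ Φ | θ α = α} : Set V), ∀ b ∈ ({α ∈ Φ | θ α = α} : Set V),
      sRefl a b ∈ ({α ∈ Φ | θ α = α} : Set V) := by
    intro a ha b hb
    refine ⟨hΦ.refl_mem a ha.1 b hb.1, ?_⟩
    rw [sRefl_apply, map_sub, map_smul, ha.2, hb.2]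
  -- θ on the Weyl vectors
  have hθρre : θ ρre = -ρre := by
    rw [hρre, map_smul, map_sum]
    rw [Finset.sum_congr rfl (fun β hβ => (hPre.subset hβ).2)]
    rw [Finset.sum_neg_distrib]
    module
  have hθρim : θ ρim = ρim := by
    rw [hρim, map_smul, map_sum]
    rw [Finset.sum_congr rfl (fun β hβ => (hPim.subset hβ).2)]
  subst hΦc
  refine ⟨⟨fun x hx => hx.1, ?_, ?_⟩, ?_, ?_, ?_⟩
  · intro a ha
    exact ⟨hΦ.neg_mem a ha.1, by rw [inner_neg_left, ha.2.1, neg_zero],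
      by rw [inner_neg_left, ha.2.2, neg_zero]⟩
  · intro a ha b hb hab
    exact ⟨hab, by rw [inner_add_left, ha.2.1, hb.2.1, add_zero],
      by rw [inner_add_left, ha.2.2, hb.2.2, add_zero]⟩
  · -- θ-invariance
    have hstep : ∀ a ∈ {α ∈ Φ | ⟪α, ρre⟫ = 0 ∧ ⟪α, ρim⟫ = 0},
        θ a ∈ {α ∈ Φ | ⟪α, ρre⟫ = 0 ∧ ⟪α, ρim⟫ = 0} := by
      intro a ha
      refine ⟨hθmem a ha.1, ?_, ?_⟩
      · rw [hselfadj, hθρre, inner_neg_right, ha.2.1, neg_zero]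
      · rw [hselfadj, hθρim, ha.2.2]
    ext x
    constructor
    · rintro ⟨a, ha, rfl⟩
      exact hstep a ha
    · intro hx
      exact ⟨θ x, hstep x hx, hinv x⟩
  · -- no imaginary roots
    ext x
    simp only [Set.mem_inter_iff, Set.mem_empty_iff_false, iff_false]
    rintro ⟨hxc, hxim⟩
    have hpos : ∀ a, a ∈ Pim → 0 < ⟪a, ∑ β ∈ Pim, β⟫ := fun a ha =>
      sum_pos_of_posSystem hΦ (fun y hy => hy.1) himNeg himAdd himRefl hPim ha
    have hval : ⟪x, ∑ β ∈ Pim, β⟫ = 0 := by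
      have := hxc.2.2
      rw [hρim, real_inner_smul_right] at this
      linarith
    rcases hPim.mem_or_neg_mem x hxim with h | h
    · have := hpos x h
      linarith
    · have := hpos (-x) h
      rw [inner_neg_left, hval] at this
      linarith
  · -- no real roots
    ext x
    simp only [Set.mem_inter_iff, Set.mem_empty_iff_false, iff_false]
    rintro ⟨hxc, hxre⟩
    have hpos : ∀ a, a ∈ Pre → 0 < ⟪a, ∑ β ∈ Pre, β⟫ := fun a ha =>
      sum_pos_of_posSystem hΦ (fun y hy => hy.1) hreNeg hreAdd hreRefl hPre ha
    have hval : ⟪x, ∑ β ∈ Pre, β⟫ = 0 := by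
      have := hxc.2.1
      rw [hρre, real_inner_smul_right] at this
      linarith
    rcases hPre.mem_or_neg_mem x hxre with h | h
    · have := hpos x h
      linarith
    · have := hpos (-x) h
      rw [inner_neg_left, hval] at this
      linarith
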